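/- Let p > 0, ν > 0, κ > 0, and for each α > 0 let x_α be the unique positive zero of f_α(x) = ν² x − 4·(p + κx/(x/α² + 1)). Then as α → ∞: (i) if ν²/(4κ) > 1, then x_α → 4p/(ν² − 4κ); (ii) if ν²/(4κ) = 1, then x_α/α → √(p/κ); (iii) if ν²/(4κ) < 1, then x_α/α² → 4κ/ν² − 1. -/

import Mathlib

open Filter

/-- The function `f_α` whose sign governs the discriminant of the characteristic polynomial
of the linearized order-parameter system. -/
noncomputable def ffun (p ν κ α x : ℝ) : ℝ :=
  ν ^ 2 * x - 4 * (p + κ * x / (x / α ^ 2 + 1))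

lemma key_product (p ν κ : ℝ) (hp : 0 < p) (hν : 0 < ν) (hκ : 0 < κ)
    (α : ℝ) (hα : 0 < α) (x : ℝ) (hx : 0 < x) (hfx : ffun p ν κ α x = 0) :
    x * ((ν ^ 2 - 4 * κ - 4 * p / α ^ 2) +
      Real.sqrt ((ν ^ 2 - 4 * κ - 4 * p / α ^ 2) ^ 2 + 16 * p * ν ^ 2 / α ^ 2)) = 8 * p := by
  set b : ℝ := ν ^ 2 - 4 * κ - 4 * p / α ^ 2 with hb
  set s : ℝ := Real.sqrt (b ^ 2 + 16 * p * ν ^ 2 / α ^ 2) with hsdef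
  have hα2 : (0:ℝ) < α ^ 2 := by positivity
  have hα2' : (α:ℝ) ^ 2 ≠ 0 := ne_of_gt hα2
  have hd : x / α ^ 2 + 1 ≠ 0 := by positivity
  have hbα : b * α ^ 2 = (ν ^ 2 - 4 * κ) * α ^ 2 - 4 * p := by
    rw [hb]; field_simp
  have hq' : b * x = 4 * p - ν ^ 2 * x ^ 2 / α ^ 2 := by
    unfold ffun at hfx
    field_simp at hfx ⊢
    nlinarith [hfx, hbα]
  have hinner : (0:ℝ) ≤ b ^ 2 + 16 * p * ν ^ 2 / α ^ 2 := by positivity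
  have hs2 : s ^ 2 = b ^ 2 + 16 * p * ν ^ 2 / α ^ 2 := Real.sq_sqrt hinner
  have hsnn : 0 ≤ s := Real.sqrt_nonneg _
  have hxs : x * s = 4 * p + ν ^ 2 * x ^ 2 / α ^ 2 := by
    have h2 : 0 ≤ x * s := by positivity
    have h3 : (0:ℝ) ≤ 4 * p + ν ^ 2 * x ^ 2 / α ^ 2 := by positivity
    have h1 : (x * s) ^ 2 = (4 * p + ν ^ 2 * x ^ 2 / α ^ 2) ^ 2 := by
      have h0 : (x * s) ^ 2 = x ^ 2 * (b ^ 2 + 16 * p * ν ^ 2 / α ^ 2) := by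
        rw [mul_pow, hs2]
      rw [h0]
      linear_combination (b * x + 4 * p - ν ^ 2 * x ^ 2 / α ^ 2) * hq'
    calc x * s = Real.sqrt ((x * s) ^ 2) := (Real.sqrt_sq h2).symm
      _ = Real.sqrt ((4 * p + ν ^ 2 * x ^ 2 / α ^ 2) ^ 2) := by rw [h1]
      _ = 4 * p + ν ^ 2 * x ^ 2 / α ^ 2 := Real.sqrt_sq h3
  linear_combination hq' + hxs

/-- Asymptotics, as `α → ∞`, of the unique positive zero `x_α` of `f_α`, according to the
position of `ν²/(4κ)` with respect to `1`. -/
theorem ffun_zero_asymptotics (p ν κ : ℝ) (hp : 0 < p) (hν : 0 < ν) (hκ : 0 < κ)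
    (X : ℝ → ℝ)
    (hX : ∀ α > 0, 0 < X α ∧ ffun p ν κ α (X α) = 0) :
    (1 < ν ^ 2 / (4 * κ) →
      Tendsto X atTop (nhds (4 * p / (ν ^ 2 - 4 * κ)))) ∧
    (ν ^ 2 / (4 * κ) = 1 →
      Tendsto (fun α => X α / α) atTop (nhds (Real.sqrt (p / κ)))) ∧
    (ν ^ 2 / (4 * κ) < 1 →
      Tendsto (fun α => X α / α ^ 2) atTop (nhds (4 * κ / ν ^ 2 - 1))) := by
  have hto0 : ∀ c : ℝ, Tendsto (fun α : ℝ => c / α ^ 2) atTop (nhds 0) :=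
    fun c => tendsto_const_nhds.div_atTop (tendsto_pow_atTop two_ne_zero)
  have hbT : Tendsto (fun α : ℝ => ν ^ 2 - 4 * κ - 4 * p / α ^ 2) atTop
      (nhds (ν ^ 2 - 4 * κ)) := by
    simpa using tendsto_const_nhds.sub (hto0 (4 * p))
  have hsT : Tendsto
      (fun α : ℝ => Real.sqrt ((ν ^ 2 - 4 * κ - 4 * p / α ^ 2) ^ 2 + 16 * p * ν ^ 2 / α ^ 2))
      atTop (nhds (Real.sqrt ((ν ^ 2 - 4 * κ) ^ 2))) := by
    have h := (hbT.pow 2).add (hto0 (16 * p * ν ^ 2))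
    rw [add_zero] at h
    exact (Real.continuous_sqrt.tendsto _).comp h
  have h4κ : (0:ℝ) < 4 * κ := by positivity
  refine ⟨?_, ?_, ?_⟩
  · -- case ν² > 4κ
    intro h
    have hL : 0 < ν ^ 2 - 4 * κ := by
      rw [lt_div_iff₀ h4κ] at h; linarith
    have hEq : (fun α : ℝ => 8 * p / ((ν ^ 2 - 4 * κ - 4 * p / α ^ 2) +
        Real.sqrt ((ν ^ 2 - 4 * κ - 4 * p / α ^ 2) ^ 2 + 16 * p * ν ^ 2 / α ^ 2)))
        =ᶠ[atTop] X := by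
      filter_upwards [eventually_gt_atTop (0:ℝ)] with α hα
      obtain ⟨hx, hf⟩ := hX α hα
      have hk := key_product p ν κ hp hν hκ α hα _ hx hf
      have hden : 0 < (ν ^ 2 - 4 * κ - 4 * p / α ^ 2) +
          Real.sqrt ((ν ^ 2 - 4 * κ - 4 * p / α ^ 2) ^ 2 + 16 * p * ν ^ 2 / α ^ 2) := by
        by_contra hcon
        push_neg at hcon
        nlinarith [mul_nonpos_of_nonneg_of_nonpos hx.le hcon]
      symm
      rw [eq_div_iff hden.ne']
      linarith [hk]
    have hT : Tendsto (fun α : ℝ => 8 * p / ((ν ^ 2 - 4 * κ - 4 * p / α ^ 2) +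
        Real.sqrt ((ν ^ 2 - 4 * κ - 4 * p / α ^ 2) ^ 2 + 16 * p * ν ^ 2 / α ^ 2))) atTop
        (nhds (8 * p / ((ν ^ 2 - 4 * κ) + Real.sqrt ((ν ^ 2 - 4 * κ) ^ 2)))) := by
      refine tendsto_const_nhds.div (hbT.add hsT) ?_
      rw [Real.sqrt_sq hL.le]; positivity
    have hval : 8 * p / ((ν ^ 2 - 4 * κ) + Real.sqrt ((ν ^ 2 - 4 * κ) ^ 2))
        = 4 * p / (ν ^ 2 - 4 * κ) := by
      rw [Real.sqrt_sq hL.le]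
      rw [div_eq_div_iff (by linarith) (by linarith)]
      ring
    rw [hval] at hT
    exact Tendsto.congr' hEq hT
  · -- case ν² = 4κ
    intro h
    have hν2 : ν ^ 2 = 4 * κ := by
      field_simp at h; linarith
    have hEq : (fun α : ℝ => 8 * p / (-(4 * p) / α +
        Real.sqrt (16 * p ^ 2 / α ^ 2 + 16 * p * ν ^ 2)))
        =ᶠ[atTop] (fun α => X α / α) := by
      filter_upwards [eventually_gt_atTop (0:ℝ)] with α hα
      obtain ⟨hx, hf⟩ := hX α hα
      have hα2' : (α:ℝ) ^ 2 ≠ 0 := by positivity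
      have hk := key_product p ν κ hp hν hκ α hα _ hx hf
      set I : ℝ := (ν ^ 2 - 4 * κ - 4 * p / α ^ 2) ^ 2 + 16 * p * ν ^ 2 / α ^ 2 with hI
      have hAS : α * Real.sqrt I = Real.sqrt (16 * p ^ 2 / α ^ 2 + 16 * p * ν ^ 2) := by
        have hm := Real.sqrt_mul (sq_nonneg α) I
        rw [Real.sqrt_sq hα.le] at hm
        rw [← hm]
        congr 1
        rw [hI, hν2]
        field_simp
        ring
      have hαb : α * (ν ^ 2 - 4 * κ - 4 * p / α ^ 2) = -(4 * p) / α := by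
        rw [hν2]; field_simp; ring
      have hD : 0 < -(4 * p) / α + Real.sqrt (16 * p ^ 2 / α ^ 2 + 16 * p * ν ^ 2) := by
        rw [← hαb, ← hAS]
        have : α * ((ν ^ 2 - 4 * κ - 4 * p / α ^ 2) + Real.sqrt I)
            = α * (ν ^ 2 - 4 * κ - 4 * p / α ^ 2) + α * Real.sqrt I := by ring
        rw [← this]
        have hsum : 0 < (ν ^ 2 - 4 * κ - 4 * p / α ^ 2) + Real.sqrt I := by
          by_contra hcon
          push_neg at hcon
          nlinarith [mul_nonpos_of_nonneg_of_nonpos hx.le hcon]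
        positivity
      symm
      rw [div_eq_div_iff hα.ne' hD.ne']
      rw [← hαb, ← hAS]
      linear_combination α * hk
    have hDT : Tendsto (fun α : ℝ => -(4 * p) / α +
        Real.sqrt (16 * p ^ 2 / α ^ 2 + 16 * p * ν ^ 2)) atTop
        (nhds (0 + Real.sqrt (0 + 16 * p * ν ^ 2))) := by
      refine Tendsto.add (tendsto_const_nhds.div_atTop tendsto_id) ?_
      exact (Real.continuous_sqrt.tendsto _).comp ((hto0 (16 * p ^ 2)).add tendsto_const_nhds)
    have hsq : (0:ℝ) < Real.sqrt (0 + 16 * p * ν ^ 2) := by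
      apply Real.sqrt_pos.mpr; positivity
    have hT : Tendsto (fun α : ℝ => 8 * p / (-(4 * p) / α +
        Real.sqrt (16 * p ^ 2 / α ^ 2 + 16 * p * ν ^ 2))) atTop
        (nhds (8 * p / (0 + Real.sqrt (0 + 16 * p * ν ^ 2)))) :=
      tendsto_const_nhds.div hDT (by linarith)
    have hval : (8 * p : ℝ) / (0 + Real.sqrt (0 + 16 * p * ν ^ 2)) = Real.sqrt (p / κ) := by
      have hsp2 : Real.sqrt p ^ 2 = p := Real.sq_sqrt hp.le
      have hsp : 0 < Real.sqrt p := Real.sqrt_pos.mpr hp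
      have h16 : Real.sqrt (0 + 16 * p * ν ^ 2) = 4 * ν * Real.sqrt p := by
        rw [show (0 + 16 * p * ν ^ 2 : ℝ) = (4 * ν * Real.sqrt p) ^ 2 by
          linear_combination (-16 : ℝ) * ν ^ 2 * hsp2]
        exact Real.sqrt_sq (by positivity)
      have hpk : p / κ = (2 * Real.sqrt p / ν) ^ 2 := by
        rw [div_pow, mul_pow, hsp2]
        rw [div_eq_div_iff (by positivity) (by positivity)]
        linear_combination p * hν2
      rw [h16, hpk, Real.sqrt_sq (by positivity), zero_add]
      rw [div_eq_div_iff (by positivity) (by positivity)]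
      linear_combination (-8 : ℝ) * ν * hsp2
    rw [hval] at hT
    exact Tendsto.congr' hEq hT
  · -- case ν² < 4κ
    intro h
    have hL : ν ^ 2 - 4 * κ < 0 := by
      rw [div_lt_iff₀ h4κ] at h; linarith
    have hν2pos : (0:ℝ) < 2 * ν ^ 2 := by positivity
    have hEq : (fun α : ℝ =>
        (Real.sqrt ((ν ^ 2 - 4 * κ - 4 * p / α ^ 2) ^ 2 + 16 * p * ν ^ 2 / α ^ 2) -
          (ν ^ 2 - 4 * κ - 4 * p / α ^ 2)) / (2 * ν ^ 2))
        =ᶠ[atTop] (fun α => X α / α ^ 2) := by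
      filter_upwards [eventually_gt_atTop (0:ℝ)] with α hα
      obtain ⟨hx, hf⟩ := hX α hα
      have hα2 : (0:ℝ) < α ^ 2 := by positivity
      have hk := key_product p ν κ hp hν hκ α hα _ hx hf
      set b : ℝ := ν ^ 2 - 4 * κ - 4 * p / α ^ 2 with hb
      set s : ℝ := Real.sqrt (b ^ 2 + 16 * p * ν ^ 2 / α ^ 2) with hsdef
      have hs2 : s ^ 2 = b ^ 2 + 16 * p * ν ^ 2 / α ^ 2 := Real.sq_sqrt (by positivity)
      have hs2' : s ^ 2 * α ^ 2 = b ^ 2 * α ^ 2 + 16 * p * ν ^ 2 := by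
        rw [hs2]; field_simp
      have h1 : X α * (16 * p * ν ^ 2) = 8 * p * (s - b) * α ^ 2 := by
        linear_combination (s - b) * α ^ 2 * hk - X α * hs2'
      have h2 : (8 * p) * (X α * (2 * ν ^ 2)) = (8 * p) * ((s - b) * α ^ 2) := by
        linear_combination h1
      have h3 : X α * (2 * ν ^ 2) = (s - b) * α ^ 2 :=
        mul_left_cancel₀ (by positivity) h2
      symm
      rw [div_eq_div_iff hα2.ne' hν2pos.ne']
      linarith [h3]
    have hT : Tendsto (fun α : ℝ =>
        (Real.sqrt ((ν ^ 2 - 4 * κ - 4 * p / α ^ 2) ^ 2 + 16 * p * ν ^ 2 / α ^ 2) -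
          (ν ^ 2 - 4 * κ - 4 * p / α ^ 2)) / (2 * ν ^ 2)) atTop
        (nhds ((Real.sqrt ((ν ^ 2 - 4 * κ) ^ 2) - (ν ^ 2 - 4 * κ)) / (2 * ν ^ 2))) :=
      (hsT.sub hbT).div tendsto_const_nhds (by positivity)
    have hval : (Real.sqrt ((ν ^ 2 - 4 * κ) ^ 2) - (ν ^ 2 - 4 * κ)) / (2 * ν ^ 2)
        = 4 * κ / ν ^ 2 - 1 := by
      rw [Real.sqrt_sq_eq_abs, abs_of_neg hL]
      rw [div_sub' (by positivity : (ν:ℝ) ^ 2 ≠ 0)]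
      rw [div_eq_div_iff (by positivity) (by positivity)]
      ring
    rw [hval] at hT
    exact Tendsto.congr' hEq hT
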